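/- Let σ, τ be commuting K-linear autoequivalences of 𝒞ₙ with σ an automorphism and τ an automorphism. Then {τ,σ} = {σ,τ}⁻¹. Equivalently: if φ : σ → τ is a natural isomorphism with inverse ψ : τ → σ, and s, s' ∈ K∖{0} satisfy σ(φ_i) = s·φ_{σ(i)} and τ(ψ_i) = s'·ψ_{τ(i)} for all objects i, then s' = s⁻¹. -/
import Mathlib


open CategoryTheory

/-- The category `𝒞ₙ`: objects are `Fin n`, every hom-space is the one-dimensional
`K`-vector space `K`, and composition is multiplication in `K` (so the identity of
every object is `1 : K`). -/
def Cn (K : Type) (n : ℕ) : Type := Fin n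

section CnSetup

variable {K : Type} [Field K] {n : ℕ}

instance : Category (Cn K n) where
  Hom _ _ := K
  id _ := (1 : K)
  comp f g := @HMul.hMul K K K _ f g
  id_comp f := @one_mul K _ f
  comp_id f := @mul_one K _ f
  assoc f g h := @mul_assoc K _ f g h

instance : Preadditive (Cn K n) where
  homGroup _ _ := inferInstanceAs (AddCommGroup K)
  add_comp _ _ _ f f' g := @add_mul K _ _ _ f f' g
  comp_add _ _ _ f g g' := @mul_add K _ _ _ f g g'

instance : CategoryTheory.Linear K (Cn K n) where
  homModule _ _ := inferInstanceAs (Module K K)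
  smul_comp _ _ _ r f g := @smul_mul_assoc K K _ _ _ r f g
  comp_smul _ _ _ f r g := @mul_smul_comm K K _ _ _ r f g

/-- The morphism `X ⟶ Y` of `𝒞ₙ` given by the scalar `r`.  In particular
`CnHom j i 1` is the canonical basic morphism `x_{ij} : j ⟶ i`. -/
def CnHom (X Y : Cn K n) (r : K) : X ⟶ Y := r

/-- The scalar underlying a morphism of `𝒞ₙ`. -/
def toK {X Y : Cn K n} (f : X ⟶ Y) : K := f

end CnSetup

/-- A functor between `K`-linear categories is `K`-linear if it is additive on hom-spaces
and commutes with the action of `K` on hom-spaces. -/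
def IsKLinearFunctor (K : Type) [Field K] {C D : Type*} [Category C] [Category D]
    [Preadditive C] [Preadditive D] [CategoryTheory.Linear K C] [CategoryTheory.Linear K D]
    (F : C ⥤ D) : Prop :=
  (∀ (X Y : C) (f g : X ⟶ Y), F.map (f + g) = F.map f + F.map g) ∧
  (∀ (X Y : C) (r : K) (f : X ⟶ Y), F.map (r • f) = r • F.map f)

/-- **Corollary (antisymmetry of the continuity pairing): `{τ,σ} = {σ,τ}⁻¹`.**
If `φ : σ ≅ τ` is a natural isomorphism with inverse `ψ = φ.inv`, and `s, s'` are nonzero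
scalars with `σ(φ_i) = s • φ_{σ(i)}` and `τ(ψ_i) = s' • ψ_{τ(i)}` for all `i`, then
`s' = s⁻¹`. -/
theorem stmt8 (K : Type) [Field K] (n : ℕ) (hn : 0 < n)
    (σ τ : Cn K n ⥤ Cn K n)
    (hσl : IsKLinearFunctor K σ) (hτl : IsKLinearFunctor K τ)
    (hσa : ∃ σ' : Cn K n ⥤ Cn K n, σ ⋙ σ' = 𝟭 (Cn K n) ∧ σ' ⋙ σ = 𝟭 (Cn K n))
    (hτa : ∃ τ' : Cn K n ⥤ Cn K n, τ ⋙ τ' = 𝟭 (Cn K n) ∧ τ' ⋙ τ = 𝟭 (Cn K n))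
    (hcomm : σ ⋙ τ = τ ⋙ σ)
    (φ : σ ≅ τ) (s s' : K) (hs : s ≠ 0) (hs' : s' ≠ 0)
    (h1 : ∀ i : Cn K n, toK (σ.map (φ.hom.app i)) = s * toK (φ.hom.app (σ.obj i)))
    (h2 : ∀ i : Cn K n, toK (τ.map (φ.inv.app i)) = s' * toK (φ.inv.app (τ.obj i))) :
    s' = s⁻¹ := by
  have i : Cn K n := (⟨0, hn⟩ : Fin n)
  -- hom-inv products are 1
  have hab : ∀ j : Cn K n, toK (φ.hom.app j) * toK (φ.inv.app j) = 1 := fun j =>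
    φ.hom_inv_id_app j
  -- σ preserves the composition φ.hom.app i ≫ φ.inv.app i = 𝟙
  have hcompσ : toK (σ.map (φ.hom.app i)) * toK (σ.map (φ.inv.app i)) = 1 := by
    have := σ.map_comp (φ.hom.app i) (φ.inv.app i)
    have h' := φ.hom_inv_id_app i
    calc toK (σ.map (φ.hom.app i)) * toK (σ.map (φ.inv.app i))
        = toK (σ.map (φ.hom.app i ≫ φ.inv.app i)) := (congrArg toK this).symm
      _ = toK (σ.map (𝟙 (σ.obj i))) := by rw [h']
      _ = 1 := congrArg toK (σ.map_id (σ.obj i))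
  -- naturality of φ.hom at ψ_i : τ.obj i ⟶ σ.obj i
  have hnat : toK (σ.map (φ.inv.app i)) * toK (φ.hom.app (σ.obj i)) =
      toK (φ.hom.app (τ.obj i)) * toK (τ.map (φ.inv.app i)) :=
    congrArg toK (φ.hom.naturality (φ.inv.app i))
  have e1 := h1 i
  have e2 := h2 i
  have habσ := hab (σ.obj i)
  have habτ := hab (τ.obj i)
  -- put everything together
  have key : s * s' = 1 := by
    set a := toK (φ.hom.app i)
    set aσ := toK (φ.hom.app (σ.obj i))
    set aτ := toK (φ.hom.app (τ.obj i))
    set bσ := toK (φ.inv.app (σ.obj i))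
    set bτ := toK (φ.inv.app (τ.obj i))
    set c := toK (σ.map (φ.inv.app i))
    rw [e1] at hcompσ
    rw [e2] at hnat
    -- hcompσ : s * aσ * c = 1, hnat : c * aσ = aτ * (s' * bτ)
    -- habτ : aτ * bτ = 1
    have : s * (aτ * (s' * bτ)) = 1 := by linear_combination hcompσ - s * hnat
    calc s * s' = s * s' * (aτ * bτ) := by rw [habτ, mul_one]
      _ = s * (aτ * (s' * bτ)) := by ring
      _ = 1 := this
  exact eq_inv_of_mul_eq_one_right key
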